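/- Let T₁, …, Tₙ be bounded linear operators on a complex Hilbert space H. Define the real n×n matrices a and b by a_{jk} = √‖T_j T_k*‖ and b_{jk} = √‖T_j* T_k‖ for j,k = 1,…,n. Then ‖∑_{k=1}^n T_k‖² ≤ ‖a‖ · ‖b‖, where ‖a‖ and ‖b‖ denote the operator norms of the matrices a and b acting on the Euclidean space ℂⁿ (equivalently ℝⁿ), and ‖·‖ on operators denotes the operator norm. -/

import Mathlib

open ContinuousLinearMap

namespace CotlarSteinAux

variable {H : Type*} [NormedAddCommGroup H] [InnerProductSpace ℂ H] [CompleteSpace H]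
variable {n : ℕ}

noncomputable def opA (T : Fin n → (H →L[ℂ] H)) (p : Fin n × Fin n) : H →L[ℂ] H :=
  T p.1 * adjoint (T p.2)

noncomputable def opP (T : Fin n → (H →L[ℂ] H)) (l : List (Fin n × Fin n)) : H →L[ℂ] H :=
  (l.map (opA T)).prod

lemma opP_nil (T : Fin n → (H →L[ℂ] H)) : opP T [] = 1 := rfl

lemma opP_cons (T : Fin n → (H →L[ℂ] H)) (p : Fin n × Fin n) (l) :
    opP T (p :: l) = opA T p * opP T l := by simp [opP]

def cA (a : Matrix (Fin n) (Fin n) ℝ) (l : List (Fin n × Fin n)) : ℝ :=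
  (l.map fun p => a p.1 p.2 ^ 2).prod

noncomputable def cB (T : Fin n → (H →L[ℂ] H)) (b : Matrix (Fin n) (Fin n) ℝ) :
    Fin n → List (Fin n × Fin n) → ℝ
  | k, [] => ‖T k‖
  | k, q :: l => b k q.1 ^ 2 * cB T b q.2 l

noncomputable def hch (T : Fin n → (H →L[ℂ] H)) (a b : Matrix (Fin n) (Fin n) ℝ) :
    Fin n → List (Fin n × Fin n) → ℝ
  | k, [] => Real.sqrt ‖T k‖
  | k, q :: l => b k q.1 * a q.1 q.2 * hch T a b q.2 l

section bounds

variable (T : Fin n → (H →L[ℂ] H)) (a b : Matrix (Fin n) (Fin n) ℝ)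
variable (ha : ∀ j k, a j k = Real.sqrt ‖T j * adjoint (T k)‖)
variable (hb : ∀ j k, b j k = Real.sqrt ‖adjoint (T j) * T k‖)

include ha in
lemma a_nonneg (j k : Fin n) : 0 ≤ a j k := by rw [ha]; exact Real.sqrt_nonneg _

include hb in
lemma b_nonneg (j k : Fin n) : 0 ≤ b j k := by rw [hb]; exact Real.sqrt_nonneg _

include ha in
lemma a_sq (j k : Fin n) : a j k ^ 2 = ‖T j * adjoint (T k)‖ := by
  rw [ha]; exact Real.sq_sqrt (norm_nonneg _)

include hb in
lemma b_sq (j k : Fin n) : b j k ^ 2 = ‖adjoint (T j) * T k‖ := by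
  rw [hb]; exact Real.sq_sqrt (norm_nonneg _)

lemma cA_nonneg (l : List (Fin n × Fin n)) : 0 ≤ cA a l := by
  induction l with
  | nil => simp [cA]
  | cons p l ih =>
    simp only [cA, List.map_cons, List.prod_cons] at ih ⊢
    exact mul_nonneg (sq_nonneg _) ih

lemma cB_nonneg (l : List (Fin n × Fin n)) (k : Fin n) : 0 ≤ cB T b k l := by
  induction l generalizing k with
  | nil => simp [cB]
  | cons q l ih => exact mul_nonneg (sq_nonneg _) (ih q.2)

include ha hb in
lemma hch_nonneg (l : List (Fin n × Fin n)) (k : Fin n) : 0 ≤ hch T a b k l := by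
  induction l generalizing k with
  | nil => simp [hch]
  | cons q l ih =>
    exact mul_nonneg (mul_nonneg (b_nonneg T b hb _ _) (a_nonneg T a ha _ _)) (ih q.2)

include ha in
lemma normP_le_cA (l : List (Fin n × Fin n)) : ‖opP T l‖ ≤ cA a l := by
  induction l with
  | nil =>
    simp only [opP_nil, cA, List.map_nil, List.prod_nil]
    rw [ContinuousLinearMap.one_def]
    exact ContinuousLinearMap.norm_id_le
  | cons p l ih =>
    rw [opP_cons]
    calc ‖opA T p * opP T l‖ ≤ ‖opA T p‖ * ‖opP T l‖ := norm_mul_le _ _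
    _ ≤ a p.1 p.2 ^ 2 * cA a l := by
        apply mul_le_mul _ ih (norm_nonneg _) (sq_nonneg _)
        exact (a_sq T a ha _ _).ge
    _ = cA a (p :: l) := by simp [cA]

include hb in
lemma normR_le_cB (l : List (Fin n × Fin n)) (k : Fin n) :
    ‖adjoint (T k) * opP T l‖ ≤ cB T b k l := by
  induction l generalizing k with
  | nil =>
    simp only [opP_nil, mul_one, cB]
    rw [show adjoint (T k) = star (T k) from (ContinuousLinearMap.star_eq_adjoint _).symm]
    exact le_of_eq (norm_star _)
  | cons q l ih =>
    have : adjoint (T k) * opP T (q :: l)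
        = (adjoint (T k) * T q.1) * (adjoint (T q.2) * opP T l) := by
      rw [opP_cons, opA]; rw [← mul_assoc, ← mul_assoc, mul_assoc (adjoint (T k) * T q.1)]
    rw [this]
    calc ‖(adjoint (T k) * T q.1) * (adjoint (T q.2) * opP T l)‖
        ≤ ‖adjoint (T k) * T q.1‖ * ‖adjoint (T q.2) * opP T l‖ := norm_mul_le _ _
    _ ≤ b k q.1 ^ 2 * cB T b q.2 l := by
        apply mul_le_mul _ (ih q.2) (norm_nonneg _) (sq_nonneg _)
        exact (b_sq T b hb _ _).ge
    _ = cB T b k (q :: l) := rfl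


include ha hb in
lemma hch_sq (l : List (Fin n × Fin n)) (k : Fin n) :
    hch T a b k l ^ 2 = cA a l * cB T b k l := by
  induction l generalizing k with
  | nil => simp [hch, cA, cB, Real.sq_sqrt (norm_nonneg (T k))]
  | cons q l ih =>
    have : cA a (q :: l) = a q.1 q.2 ^ 2 * cA a l := by simp [cA]
    rw [show hch T a b k (q :: l) = b k q.1 * a q.1 q.2 * hch T a b q.2 l from rfl, this,
      show cB T b k (q :: l) = b k q.1 ^ 2 * cB T b q.2 l from rfl]
    rw [mul_pow, mul_pow, ih q.2]
    ring

include ha hb in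
lemma key (l : List (Fin n × Fin n)) (p : Fin n × Fin n) :
    ‖opP T (p :: l)‖ ≤ Real.sqrt ‖T p.1‖ * a p.1 p.2 * hch T a b p.2 l := by
  have h1 : ‖opP T (p :: l)‖ ≤ a p.1 p.2 ^ 2 * cA a l := by
    have := normP_le_cA T a ha (p :: l)
    simpa [cA] using this
  have h2 : ‖opP T (p :: l)‖ ≤ ‖T p.1‖ * cB T b p.2 l := by
    have hrw : opP T (p :: l) = T p.1 * (adjoint (T p.2) * opP T l) := by
      rw [opP_cons, opA, mul_assoc]
    rw [hrw]
    calc ‖T p.1 * (adjoint (T p.2) * opP T l)‖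
        ≤ ‖T p.1‖ * ‖adjoint (T p.2) * opP T l‖ := norm_mul_le _ _
    _ ≤ ‖T p.1‖ * cB T b p.2 l :=
        mul_le_mul_of_nonneg_left (normR_le_cB T b hb l p.2) (norm_nonneg _)
  have hR : (Real.sqrt ‖T p.1‖ * a p.1 p.2 * hch T a b p.2 l) ^ 2
      = (a p.1 p.2 ^ 2 * cA a l) * (‖T p.1‖ * cB T b p.2 l) := by
    rw [mul_pow, mul_pow, Real.sq_sqrt (norm_nonneg _), hch_sq T a b ha hb]
    ring
  have hRnn : 0 ≤ Real.sqrt ‖T p.1‖ * a p.1 p.2 * hch T a b p.2 l :=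
    mul_nonneg (mul_nonneg (Real.sqrt_nonneg _) (a_nonneg T a ha _ _))
      (hch_nonneg T a b ha hb l p.2)
  nlinarith [norm_nonneg (opP T (p :: l)), mul_le_mul h1 h2 (norm_nonneg _)
    (mul_nonneg (sq_nonneg _) (cA_nonneg a l))]

include ha hb in
lemma sum_hch (m : ℕ) (k : Fin n) :
    ∑ c : Fin m → Fin n × Fin n, hch T a b k (List.ofFn c)
      = ((b * a) ^ m).mulVec (fun j => Real.sqrt ‖T j‖) k := by
  induction m generalizing k with
  | zero =>
    rw [Fintype.sum_unique]
    simp [hch, Matrix.one_mulVec]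
  | succ m ih =>
    rw [← Fintype.sum_equiv (Fin.consEquiv (fun _ : Fin (m+1) => Fin n × Fin n))
      (fun pc => hch T a b k (List.ofFn (Fin.cons pc.1 pc.2)))
      (fun c => hch T a b k (List.ofFn c)) (fun pc => rfl)]
    have hofn : ∀ (p : Fin n × Fin n) (c : Fin m → Fin n × Fin n),
        List.ofFn (Fin.cons p c : Fin (m+1) → Fin n × Fin n) = p :: List.ofFn c := by
      intro p c
      rw [List.ofFn_succ]
      simp
    rw [Fintype.sum_prod_type]
    have : ∀ p : Fin n × Fin n, ∑ c : Fin m → Fin n × Fin n,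
        hch T a b k (List.ofFn (Fin.cons p c)) =
        b k p.1 * a p.1 p.2 * ((b * a) ^ m).mulVec (fun j => Real.sqrt ‖T j‖) p.2 := by
      intro p
      rw [← ih p.2, Finset.mul_sum]
      exact Finset.sum_congr rfl fun c _ => by rw [hofn p c]; rfl
    rw [Finset.sum_congr rfl fun p _ => this p]
    rw [pow_succ', ← Matrix.mulVec_mulVec]
    set w : Fin n → ℝ := ((b * a) ^ m).mulVec (fun j => Real.sqrt ‖T j‖) with hw
    rw [Fintype.sum_prod_type]
    simp only [Matrix.mulVec, dotProduct, Matrix.mul_apply, Finset.sum_mul]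
    rw [Finset.sum_comm]


lemma expand (m : ℕ) :
    (∑ p : Fin n × Fin n, opA T p) ^ m
      = ∑ c : Fin m → Fin n × Fin n, opP T (List.ofFn c) := by
  induction m with
  | zero => rw [pow_zero, Fintype.sum_unique]; rfl
  | succ m ih =>
    rw [pow_succ', ih, Finset.sum_mul_sum]
    rw [show (∑ c : Fin (m+1) → Fin n × Fin n, opP T (List.ofFn c))
        = ∑ pc : (Fin n × Fin n) × (Fin m → Fin n × Fin n),
            opP T (List.ofFn (Fin.consEquiv (fun _ : Fin (m+1) => Fin n × Fin n) pc)) from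
      (Fintype.sum_equiv (Fin.consEquiv (fun _ : Fin (m+1) => Fin n × Fin n)) _ _
        (fun pc => rfl)).symm]
    conv_rhs => rw [Fintype.sum_prod_type]
    refine Fintype.sum_congr _ _ fun p => Fintype.sum_congr _ _ fun c => ?_
    have h1 : (Fin.consEquiv (fun _ : Fin (m+1) => Fin n × Fin n)) (p, c) = Fin.cons p c := rfl
    have h2 : List.ofFn (Fin.cons p c : Fin (m+1) → Fin n × Fin n) = p :: List.ofFn c := by
      rw [List.ofFn_succ]; simp
    rw [h1, h2, opP_cons]

include ha hb in
lemma main_bound (m : ℕ) :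
    ‖(∑ p : Fin n × Fin n, opA T p) ^ (m + 1)‖
      ≤ dotProduct (fun j => Real.sqrt ‖T j‖)
          ((a * (b * a) ^ m).mulVec (fun j => Real.sqrt ‖T j‖)) := by
  rw [expand]
  refine le_trans (norm_sum_le _ _) ?_
  rw [← Fintype.sum_equiv (Fin.consEquiv (fun _ : Fin (m+1) => Fin n × Fin n))
    (fun pc => ‖opP T (List.ofFn (Fin.cons pc.1 pc.2))‖)
    (fun c => ‖opP T (List.ofFn c)‖) (fun pc => rfl)]
  rw [Fintype.sum_prod_type]
  have step : ∀ p : Fin n × Fin n, ∑ c : Fin m → Fin n × Fin n,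
      ‖opP T (List.ofFn (Fin.cons p c))‖
      ≤ Real.sqrt ‖T p.1‖ * a p.1 p.2 * ((b * a) ^ m).mulVec (fun j => Real.sqrt ‖T j‖) p.2 := by
    intro p
    rw [← sum_hch T a b ha hb m p.2, Finset.mul_sum]
    refine Finset.sum_le_sum fun c _ => ?_
    have : List.ofFn (Fin.cons p c : Fin (m+1) → Fin n × Fin n) = p :: List.ofFn c := by
      rw [List.ofFn_succ]; simp
    rw [this]
    exact key T a b ha hb (List.ofFn c) p
  refine le_trans (Finset.sum_le_sum fun p _ => step p) (le_of_eq ?_)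
  rw [dotProduct, ← Matrix.mulVec_mulVec, Fintype.sum_prod_type]
  set w : Fin n → ℝ := ((b * a) ^ m).mulVec (fun j => Real.sqrt ‖T j‖) with hw
  simp only [Matrix.mulVec, dotProduct, Finset.mul_sum, Finset.sum_mul]
  refine Finset.sum_congr rfl fun i _ => Finset.sum_congr rfl fun j _ => by ring

end bounds

lemma norm_pow_le_aux {E : Type*} [NormedAddCommGroup E] [InnerProductSpace ℝ E]
    (x : E →L[ℝ] E) (m : ℕ) : ‖x ^ m‖ ≤ ‖x‖ ^ m := by
  induction m with
  | zero =>
    rw [pow_zero, pow_zero, ContinuousLinearMap.one_def]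
    exact ContinuousLinearMap.norm_id_le
  | succ m ih =>
    rw [pow_succ, pow_succ]
    exact le_trans (norm_mul_le _ _) (mul_le_mul_of_nonneg_right ih (norm_nonneg _))

lemma dot_le_opNorm {n : ℕ} (M : Matrix (Fin n) (Fin n) ℝ) (u : Fin n → ℝ) :
    dotProduct u (M.mulVec u)
      ≤ ‖Matrix.toEuclideanCLM (𝕜 := ℝ) M‖
        * (‖(WithLp.equiv 2 (Fin n → ℝ)).symm u‖ * ‖(WithLp.equiv 2 (Fin n → ℝ)).symm u‖) := by
  set u' : EuclideanSpace ℝ (Fin n) := (WithLp.equiv 2 (Fin n → ℝ)).symm u with hu'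
  have h1 : dotProduct u (M.mulVec u)
      = inner ℝ u' ((Matrix.toEuclideanCLM (𝕜 := ℝ) M) u') := by
    rw [hu', WithLp.equiv_symm_apply, Matrix.toEuclideanCLM_toLp]
    simp [dotProduct, PiLp.inner_apply, RCLike.inner_apply, Matrix.mulVec,
      Matrix.toLin'_apply, mul_comm]
  rw [h1]
  calc inner ℝ u' ((Matrix.toEuclideanCLM (𝕜 := ℝ) M) u')
      ≤ ‖u'‖ * ‖(Matrix.toEuclideanCLM (𝕜 := ℝ) M) u'‖ := real_inner_le_norm _ _
  _ ≤ ‖u'‖ * (‖Matrix.toEuclideanCLM (𝕜 := ℝ) M‖ * ‖u'‖) :=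
      mul_le_mul_of_nonneg_left (ContinuousLinearMap.le_opNorm _ _) (norm_nonneg _)
  _ = ‖Matrix.toEuclideanCLM (𝕜 := ℝ) M‖ * (‖u'‖ * ‖u'‖) := by ring

end CotlarSteinAux

open ContinuousLinearMap

set_option maxHeartbeats 1000000 in
set_option synthInstance.maxHeartbeats 200000 in
/-- **Calderón–Vaillancourt sharpening of the Cotlar–Stein lemma.**
`‖∑ T k‖² ≤ ‖a‖ ‖b‖` where `a j k = √‖T j (T k)†‖` and `b j k = √‖(T j)† T k‖`,
with matrix norms taken as operators on Euclidean `n`-space. -/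
theorem improved_cotlar_stein {H : Type*} [NormedAddCommGroup H] [InnerProductSpace ℂ H]
    [CompleteSpace H] {n : ℕ} (T : Fin n → (H →L[ℂ] H))
    (a b : Matrix (Fin n) (Fin n) ℝ)
    (ha : ∀ j k, a j k = Real.sqrt ‖T j * adjoint (T k)‖)
    (hb : ∀ j k, b j k = Real.sqrt ‖adjoint (T j) * T k‖) :
    ‖∑ k, T k‖ ^ 2 ≤
      ‖Matrix.toEuclideanCLM (𝕜 := ℝ) a‖ * ‖Matrix.toEuclideanCLM (𝕜 := ℝ) b‖ := by
  classical
  obtain ⟨α, hαdef⟩ : ∃ x, x = ‖Matrix.toEuclideanCLM (𝕜 := ℝ) a‖ := ⟨_, rfl⟩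
  obtain ⟨β, hβdef⟩ : ∃ x, x = ‖Matrix.toEuclideanCLM (𝕜 := ℝ) b‖ := ⟨_, rfl⟩
  rw [← hαdef, ← hβdef]
  have hadiag : ∀ j, a j j = ‖T j‖ := by
    intro j
    rw [ha, show T j * adjoint (T j) = T j * star (T j) by
      rw [ContinuousLinearMap.star_eq_adjoint], CStarRing.norm_self_mul_star]
    exact Real.sqrt_mul_self (norm_nonneg _)
  have hbdiag : ∀ j, b j j = ‖T j‖ := by
    intro j
    rw [hb, show adjoint (T j) * T j = star (T j) * T j by
      rw [ContinuousLinearMap.star_eq_adjoint], CStarRing.norm_star_mul_self]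
    exact Real.sqrt_mul_self (norm_nonneg _)
  have hzero : ∀ M : Matrix (Fin n) (Fin n) ℝ, (∀ j, M j j = ‖T j‖) →
      ‖Matrix.toEuclideanCLM (𝕜 := ℝ) M‖ = 0 →
      ‖∑ k, T k‖ ^ 2 ≤ α * β := by
    intro M hdiag h0
    have hM : M = 0 := by
      have h1 : Matrix.toEuclideanCLM (𝕜 := ℝ) M = 0 := norm_eq_zero.mp h0
      have h2 : M = (Matrix.toEuclideanCLM (𝕜 := ℝ)).symm 0 := by
        rw [← h1]; simp
      simpa using h2
    have hT : ∀ j, T j = 0 := by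
      intro j
      have := hdiag j
      rw [hM] at this
      simp only [Matrix.zero_apply] at this
      exact norm_eq_zero.mp this.symm
    rw [Finset.sum_eq_zero fun j _ => hT j, norm_zero]
    rw [show (0:ℝ)^2 = 0 by norm_num, hαdef, hβdef]
    exact mul_nonneg (norm_nonneg (Matrix.toEuclideanCLM (𝕜 := ℝ) a))
      (norm_nonneg (Matrix.toEuclideanCLM (𝕜 := ℝ) b))
  by_cases hα0 : α = 0
  · exact hzero a hadiag (by rw [← hαdef]; exact hα0)
  by_cases hβ0 : β = 0
  · exact hzero b hbdiag (by rw [← hβdef]; exact hβ0)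
  have hαpos : 0 < α := lt_of_le_of_ne (by rw [hαdef]; exact norm_nonneg _) (Ne.symm hα0)
  have hβpos : 0 < β := lt_of_le_of_ne (by rw [hβdef]; exact norm_nonneg _) (Ne.symm hβ0)
  obtain ⟨S, hS⟩ : ∃ S, S = ∑ k, T k := ⟨_, rfl⟩
  rw [show ∑ k, T k = S from hS.symm]
  set u : Fin n → ℝ := fun j => Real.sqrt ‖T j‖ with hu
  obtain ⟨Cu, hCu⟩ : ∃ x, x = ‖(WithLp.equiv 2 (Fin n → ℝ)).symm u‖
      * ‖(WithLp.equiv 2 (Fin n → ℝ)).symm u‖ := ⟨_, rfl⟩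
  have hCunn : 0 ≤ Cu := hCu ▸ mul_nonneg (norm_nonneg _) (norm_nonneg _)
  have hQdef : (∑ p : Fin n × Fin n, CotlarSteinAux.opA T p) = S * adjoint S := by
    have h1 : adjoint S = ∑ k, adjoint (T k) := by
      rw [hS, map_sum]
    rw [h1, hS, Finset.sum_mul_sum, Fintype.sum_prod_type]
    rfl
  have hQsa : IsSelfAdjoint (S * adjoint S) := by
    rw [← ContinuousLinearMap.star_eq_adjoint]
    exact IsSelfAdjoint.mul_star_self S
  have hQnorm : ‖S * adjoint S‖ = ‖S‖ ^ 2 := by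
    rw [← ContinuousLinearMap.star_eq_adjoint, CStarRing.norm_self_mul_star, sq]
  have hQpow : ∀ k : ℕ, ‖(S * adjoint S) ^ (2 ^ k)‖ = (‖S‖ ^ 2) ^ (2 ^ k) := by
    intro k
    induction k with
    | zero => simpa using hQnorm
    | succ k ih =>
      have hsa : IsSelfAdjoint ((S * adjoint S) ^ (2 ^ k)) := hQsa.pow _
      have h2 : ‖((S * adjoint S) ^ (2 ^ k)) * ((S * adjoint S) ^ (2 ^ k))‖
          = ‖(S * adjoint S) ^ (2 ^ k)‖ * ‖(S * adjoint S) ^ (2 ^ k)‖ := by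
        rw [show ((S * adjoint S) ^ (2 ^ k)) * ((S * adjoint S) ^ (2 ^ k))
            = star ((S * adjoint S) ^ (2 ^ k)) * ((S * adjoint S) ^ (2 ^ k)) from by
          rw [hsa.star_eq]]
        exact CStarRing.norm_star_mul_self
      have hsplit : 2 ^ (k + 1) = 2 ^ k + 2 ^ k := by rw [pow_succ, mul_two]
      rw [hsplit, pow_add, h2, ih, ← pow_add]
  have bound : ∀ m : ℕ, ‖(S * adjoint S) ^ (m + 1)‖ ≤ α * (β * α) ^ m * Cu := by
    intro m
    rw [← hQdef, hαdef, hβdef, hCu]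
    refine le_trans (CotlarSteinAux.main_bound T a b ha hb m) ?_
    refine le_trans (CotlarSteinAux.dot_le_opNorm (a * (b * a) ^ m) u) ?_
    refine mul_le_mul_of_nonneg_right ?_ (mul_nonneg (norm_nonneg _) (norm_nonneg _))
    rw [map_mul, map_pow, map_mul]
    calc ‖Matrix.toEuclideanCLM (𝕜 := ℝ) a
          * (Matrix.toEuclideanCLM (𝕜 := ℝ) b * Matrix.toEuclideanCLM (𝕜 := ℝ) a) ^ m‖
        ≤ ‖Matrix.toEuclideanCLM (𝕜 := ℝ) a‖ * ‖(Matrix.toEuclideanCLM (𝕜 := ℝ) b * Matrix.toEuclideanCLM (𝕜 := ℝ) a) ^ m‖ :=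
          norm_mul_le _ _
    _ ≤ ‖Matrix.toEuclideanCLM (𝕜 := ℝ) a‖ * ‖Matrix.toEuclideanCLM (𝕜 := ℝ) b * Matrix.toEuclideanCLM (𝕜 := ℝ) a‖ ^ m :=
          mul_le_mul_of_nonneg_left (CotlarSteinAux.norm_pow_le_aux _ m) (norm_nonneg _)
    _ ≤ ‖Matrix.toEuclideanCLM (𝕜 := ℝ) a‖ * (‖Matrix.toEuclideanCLM (𝕜 := ℝ) b‖ * ‖Matrix.toEuclideanCLM (𝕜 := ℝ) a‖) ^ m := by
          refine mul_le_mul_of_nonneg_left ?_ (norm_nonneg _)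
          exact pow_le_pow_left₀ (norm_nonneg _) (norm_mul_le _ _) m
  -- final limiting argument
  by_contra hcon
  push_neg at hcon
  set r := ‖S‖ ^ 2 with hr
  set L := α * β with hL
  have hLpos : 0 < L := mul_pos hαpos hβpos
  have hrL : L < r := hcon
  have h1r : 1 < r / L := (one_lt_div hLpos).mpr hrL
  have keybound : ∀ N : ℕ, (r / L) ^ (2 ^ N) ≤ Cu / β := by
    intro N
    have hm : 2 ^ N = (2 ^ N - 1) + 1 := (Nat.succ_pred_eq_of_pos (Nat.pow_pos (n := N)
      (by norm_num))).symm
    set m := 2 ^ N - 1 with hmdef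
    have hb1 : r ^ (2 ^ N) ≤ α * (β * α) ^ m * Cu := by
      rw [← hQpow N, hm]
      exact bound m
    have hb2 : α * (β * α) ^ m * Cu = L ^ (2 ^ N) * (Cu / β) := by
      rw [hm, hL, mul_pow, mul_pow, pow_succ]
      field_simp
      ring
    rw [div_pow, div_le_div_iff₀ (pow_pos hLpos _) hβpos]
    rw [hb2] at hb1
    calc r ^ 2 ^ N * β ≤ (L ^ (2 ^ N) * (Cu / β)) * β := by
          refine mul_le_mul_of_nonneg_right hb1 (le_of_lt hβpos)
    _ = Cu * L ^ 2 ^ N := by field_simp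
  obtain ⟨N, hN⟩ := pow_unbounded_of_one_lt (Cu / β) h1r
  have h2 : (r / L) ^ N ≤ (r / L) ^ (2 ^ N) :=
    pow_le_pow_right₀ (le_of_lt h1r) (le_of_lt (Nat.lt_two_pow_self (n := N)))
  exact absurd (keybound N) (not_le.mpr (lt_of_lt_of_le hN h2))
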